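/- Let Γ be a finite group acting on a field K' with fixed field K, and let (c_σ)_{σ∈Γ} be a family of elements of (K')^× satisfying the cocycle condition c_{στ} = c_σ · σ(c_τ). Then there exists c ∈ (K')^× such that c_σ = c / σ(c) for all σ ∈ Γ. -/

import Mathlib

/-- **Hilbert's Theorem 90.** Let `K'/K` be a finite Galois extension, with
Galois group `Γ = Gal(K'/K)` (a finite group acting on the field `K'` with fixed field `K`).
If `(c_σ)_{σ ∈ Γ}` is a family of elements of `(K')ˣ` satisfying the cocycle condition
`c_{στ} = c_σ · σ(c_τ)`, then there exists `c ∈ (K')ˣ` with `c_σ = c / σ(c)` for all `σ`. -/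
theorem hilbert90_cocycle_is_coboundary
    (K K' : Type*) [Field K] [Field K'] [Algebra K K']
    [IsGalois K K'] [FiniteDimensional K K']
    (c : (K' ≃ₐ[K] K') → K'ˣ)
    (hc : ∀ σ τ : K' ≃ₐ[K] K', (c (σ * τ) : K') = (c σ : K') * σ ((c τ : K'))) :
    ∃ β : K'ˣ, ∀ σ : K' ≃ₐ[K] K', (c σ : K') = (β : K') / σ ((β : K')) := by
  have hcoc : groupCohomology.IsMulCocycle₁ c := by
    intro g h
    ext
    simp only [Units.val_mul, AlgEquiv.smul_units_def, Units.coe_map, MonoidHom.coe_coe]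
    rw [hc g h, mul_comm]
  obtain ⟨β, hβ⟩ :=
    groupCohomology.isMulCoboundary₁_of_isMulCocycle₁_of_aut_to_units c hcoc
  refine ⟨β⁻¹, fun σ => ?_⟩
  have := congrArg Units.val (hβ σ)
  simp only [AlgEquiv.smul_units_def, Units.val_div_eq_div_val, Units.coe_map,
    MonoidHom.coe_coe] at this
  rw [← this]
  field_simp
  rw [← map_mul, Units.mul_inv, map_one]
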